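/- Let z = (r,d) in Z^2 with r > 0 and gcd(r,d) = 1, and let x in Z^2 with 0 < x_1 < r lie strictly above the line through 0 and z. If gcd(x_1,x_2) ≥ 2 and gcd(z_1-x_1,z_2-x_2) ≥ 3, or gcd(x_1,x_2) ≥ 3 and gcd(z_1-x_1,z_2-x_2) ≥ 2, then the triangle with vertices (0,0), x, z contains a lattice point in its interior. -/

import Mathlib

/-- `det(a,b) = a₁b₂ - a₂b₁`. -/
def detZ (a b : ℤ × ℤ) : ℤ := a.1 * b.2 - a.2 * b.1

/-- Embedding of `ℤ²` into `ℝ²`. -/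
def toR (p : ℤ × ℤ) : ℝ × ℝ := ((p.1 : ℝ), (p.2 : ℝ))

lemma combo_mem_convexHull_triple {u v w : ℝ × ℝ} {a b c : ℝ} (ha : 0 ≤ a) (hb : 0 ≤ b)
    (hc : 0 ≤ c) (habc : a + b + c = 1) :
    a • u + b • v + c • w ∈ convexHull ℝ ({u, v, w} : Set (ℝ × ℝ)) := by
  have h := Finset.centerMass_mem_convexHull (Finset.univ : Finset (Fin 3))
    (w := ![a, b, c]) (z := ![u, v, w]) (s := ({u, v, w} : Set (ℝ × ℝ)))
    (by intro i _; fin_cases i <;> simpa)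
    (by simp [Fin.sum_univ_three]; linarith)
    (by intro i _; fin_cases i <;> simp)
  rw [Finset.centerMass] at h
  simpa [Fin.sum_univ_three, habc] using h

/-- Let `z = (r,d)` with `r > 0` and `gcd(r,d) = 1`, and let `x` with `0 < x₁ < r`
lie strictly above the line through `0` and `z` (i.e. `detZ z x > 0`).  If
`deg(x) ≥ 2` and `deg(z-x) ≥ 3`, or `deg(x) ≥ 3` and `deg(z-x) ≥ 2`, then the
triangle with vertices `(0,0)`, `x`, `z` contains a lattice point in its interior. -/
theorem interior_point_of_degrees (z x : ℤ × ℤ) (hz : 0 < z.1)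
    (hgcd : Int.gcd z.1 z.2 = 1) (hx1 : 0 < x.1) (hx2 : x.1 < z.1)
    (habove : 0 < detZ z x)
    (hdeg : (2 ≤ Int.gcd x.1 x.2 ∧ 3 ≤ Int.gcd (z.1 - x.1) (z.2 - x.2)) ∨
            (3 ≤ Int.gcd x.1 x.2 ∧ 2 ≤ Int.gcd (z.1 - x.1) (z.2 - x.2))) :
    ∃ p : ℤ × ℤ, toR p ∈ interior (convexHull ℝ {(0 : ℝ × ℝ), toR x, toR z}) := by
  set A : ℤ := (Int.gcd x.1 x.2 : ℤ) with hAdef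
  set B : ℤ := (Int.gcd (z.1 - x.1) (z.2 - x.2) : ℤ) with hBdef
  have hA2 : 2 ≤ A := by
    rw [hAdef]
    rcases hdeg with ⟨h, _⟩ | ⟨h, _⟩ <;>
      exact_mod_cast (show (2:ℕ) ≤ _ by omega)
  have hB2 : 2 ≤ B := by
    rw [hBdef]
    rcases hdeg with ⟨_, h⟩ | ⟨_, h⟩ <;>
      exact_mod_cast (show (2:ℕ) ≤ _ by omega)
  have hABk : A + B + 1 ≤ A * B := by
    rcases hdeg with ⟨h1, h2⟩ | ⟨h1, h2⟩
    · have h1' : (2 : ℤ) ≤ A := by rw [hAdef]; exact_mod_cast h1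
      have h2' : (3 : ℤ) ≤ B := by rw [hBdef]; exact_mod_cast h2
      nlinarith
    · have h1' : (3 : ℤ) ≤ A := by rw [hAdef]; exact_mod_cast h1
      have h2' : (2 : ℤ) ≤ B := by rw [hBdef]; exact_mod_cast h2
      nlinarith
  obtain ⟨u1, hu1⟩ : A ∣ x.1 := Int.gcd_dvd_left x.1 x.2
  obtain ⟨u2, hu2⟩ : A ∣ x.2 := Int.gcd_dvd_right x.1 x.2
  obtain ⟨v1, hv1⟩ : B ∣ (z.1 - x.1) := Int.gcd_dvd_left (z.1 - x.1) (z.2 - x.2)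
  obtain ⟨v2, hv2⟩ : B ∣ (z.2 - x.2) := Int.gcd_dvd_right (z.1 - x.1) (z.2 - x.2)
  set E : ℤ := u2 * v1 - u1 * v2 with hEdef
  have hz1 : z.1 = A * u1 + B * v1 := by linarith
  have hz2 : z.2 = A * u2 + B * v2 := by linarith
  have hD : detZ z x = A * B * E := by
    simp only [detZ, hEdef]
    rw [hz1, hz2, hu1, hu2]; ring
  have hE : 0 < E := by
    by_contra h
    push_neg at h
    have hABpos : 0 < A * B := mul_pos (by linarith) (by linarith)
    have h2 : A * B * E ≤ 0 := mul_nonpos_of_nonneg_of_nonpos hABpos.le h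
    rw [hD] at habove
    linarith
  -- the candidate interior lattice point
  refine ⟨(x.1 - u1 + v1, x.2 - u2 + v2), ?_⟩
  set p : ℤ × ℤ := (x.1 - u1 + v1, x.2 - u2 + v2) with hpdef
  -- integer inequalities
  have hf : z.1 * p.2 - z.2 * p.1 = E * (A * B - A - B) := by
    simp only [hpdef, hEdef]
    rw [hz1, hz2, hu1, hu2]; ring
  have hg : p.1 * x.2 - p.2 * x.1 = A * E := by
    simp only [hpdef, hEdef]
    rw [hu1, hu2]; ring
  have hi1 : 0 < z.1 * p.2 - z.2 * p.1 := by
    rw [hf]; exact mul_pos hE (by linarith)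
  have hi2 : 0 < p.1 * x.2 - p.2 * x.1 := by
    rw [hg]; exact mul_pos (by linarith) hE
  have hi3 : (z.1 * p.2 - z.2 * p.1) + (p.1 * x.2 - p.2 * x.1) < detZ z x := by
    rw [hf, hg, hD]
    have hEB : 0 < E * B := mul_pos hE (by linarith)
    have hkey : E * (A * B - A - B) + A * E + E * B = A * B * E := by ring
    linarith
  -- move to ℝ
  set D' : ℝ := ((detZ z x : ℤ) : ℝ) with hD'def
  have hD'pos : 0 < D' := by rw [hD'def]; exact_mod_cast habove
  have hD'eq : D' = (z.1 : ℝ) * (x.2 : ℝ) - (z.2 : ℝ) * (x.1 : ℝ) := by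
    simp [hD'def, detZ]
  set S : Set (ℝ × ℝ) :=
    {q | 0 < (z.1 : ℝ) * q.2 - (z.2 : ℝ) * q.1 ∧
         0 < q.1 * (x.2 : ℝ) - q.2 * (x.1 : ℝ) ∧
         ((z.1 : ℝ) * q.2 - (z.2 : ℝ) * q.1) + (q.1 * (x.2 : ℝ) - q.2 * (x.1 : ℝ)) < D'}
    with hSdef
  have hSopen : IsOpen S := by
    rw [hSdef]
    simp only [Set.setOf_and]
    refine IsOpen.inter (isOpen_lt continuous_const (by fun_prop))
      (IsOpen.inter (isOpen_lt continuous_const (by fun_prop))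
        (isOpen_lt (by fun_prop) continuous_const))
  have hsub : S ⊆ convexHull ℝ ({(0 : ℝ × ℝ), toR x, toR z} : Set (ℝ × ℝ)) := by
    rintro q ⟨h1, h2, h3⟩
    set β : ℝ := ((z.1 : ℝ) * q.2 - (z.2 : ℝ) * q.1) / D' with hβdef
    set γ : ℝ := (q.1 * (x.2 : ℝ) - q.2 * (x.1 : ℝ)) / D' with hγdef
    have hβpos : 0 < β := div_pos h1 hD'pos
    have hγpos : 0 < γ := div_pos h2 hD'pos
    have hαpos : 0 < 1 - β - γ := by
      have : β + γ < 1 := by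
        rw [hβdef, hγdef, ← add_div, div_lt_one hD'pos]
        linarith
      linarith
    have hq : q = (1 - β - γ) • (0 : ℝ × ℝ) + β • toR x + γ • toR z := by
      have hD'ne : D' ≠ 0 := ne_of_gt hD'pos
      apply Prod.ext
      · simp only [Prod.fst_add, Prod.smul_fst, Prod.fst_zero, smul_eq_mul, mul_zero, toR,
          hβdef, hγdef]
        field_simp
        linear_combination q.1 * hD'eq
      · simp only [Prod.snd_add, Prod.smul_snd, Prod.snd_zero, smul_eq_mul, mul_zero, toR,
          hβdef, hγdef]
        field_simp
        linear_combination q.2 * hD'eq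
    rw [hq]
    exact combo_mem_convexHull_triple (le_of_lt hαpos) (le_of_lt hβpos) (le_of_lt hγpos)
      (by ring)
  have hpS : toR p ∈ S := by
    refine ⟨?_, ?_, ?_⟩
    · show 0 < (z.1 : ℝ) * ((p.2 : ℤ) : ℝ) - (z.2 : ℝ) * ((p.1 : ℤ) : ℝ)
      exact_mod_cast hi1
    · show 0 < ((p.1 : ℤ) : ℝ) * (x.2 : ℝ) - ((p.2 : ℤ) : ℝ) * (x.1 : ℝ)
      exact_mod_cast hi2
    · show ((z.1 : ℝ) * ((p.2 : ℤ) : ℝ) - (z.2 : ℝ) * ((p.1 : ℤ) : ℝ)) +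
        (((p.1 : ℤ) : ℝ) * (x.2 : ℝ) - ((p.2 : ℤ) : ℝ) * (x.1 : ℝ)) < D'
      rw [hD'def]
      exact_mod_cast hi3
  exact interior_maximal hsub hSopen hpS
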